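/- Let f : X → Y be a local homeomorphism between Hausdorff topological spaces which is a closed map (it maps closed subsets of X to closed subsets of Y). Then f has the path-lifting property: for every continuous α : [0,1] → Y and every x₀ ∈ X with f(x₀) = α(0), there exists a continuous α̃ : [0,1] → X with f ∘ α̃ = α and α̃(0) = x₀. -/

import Mathlib

open Set Filter Topology

set_option linter.unusedSectionVars false
set_option linter.unusedVariables false

section Aux

variable {X Y : Type*} [TopologicalSpace X] [TopologicalSpace Y]
  [T2Space X] [T2Space Y] {f : X → Y}

lemma lift_unique_aux (hf : IsLocalHomeomorph f) {a b : ℝ} {g₁ g₂ : ℝ → X}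
    (h₁ : ContinuousOn g₁ (Icc a b)) (h₂ : ContinuousOn g₂ (Icc a b))
    (hfg : ∀ t ∈ Icc a b, f (g₁ t) = f (g₂ t)) (hab : a ≤ b)
    (h0 : g₁ a = g₂ a) : EqOn g₁ g₂ (Icc a b) := by
  set S : Set ℝ := Icc a b with hS
  haveI : PreconnectedSpace S := Subtype.preconnectedSpace isPreconnected_Icc
  have hc₁ : Continuous (S.restrict g₁) := h₁.restrict
  have hc₂ : Continuous (S.restrict g₂) := h₂.restrict
  set A : Set S := {t | g₁ ↑t = g₂ ↑t} with hA
  have hclosed : IsClosed A := isClosed_eq hc₁ hc₂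
  have hopen : IsOpen A := by
    rw [isOpen_iff_mem_nhds]
    rintro t (ht : g₁ ↑t = g₂ ↑t)
    obtain ⟨e, hsrc, hfe⟩ := hf (g₁ ↑t)
    have hsrc₂ : g₂ ↑t ∈ e.source := ht ▸ hsrc
    have hV : IsOpen {r : S | g₁ ↑r ∈ e.source ∧ g₂ ↑r ∈ e.source} :=
      (e.open_source.preimage hc₁).inter (e.open_source.preimage hc₂)
    refine Filter.mem_of_superset (hV.mem_nhds ⟨hsrc, hsrc₂⟩) ?_
    rintro r ⟨hr₁, hr₂⟩
    have := hfg ↑r r.2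
    rw [hfe] at this
    exact e.injOn hr₁ hr₂ this
  have hne : A.Nonempty := ⟨⟨a, left_mem_Icc.2 hab⟩, h0⟩
  have : A = univ := IsClopen.eq_univ ⟨hclosed, hopen⟩ hne
  intro t ht
  have : (⟨t, ht⟩ : S) ∈ A := this ▸ mem_univ _
  exact this

lemma extend_right_aux (hf : IsLocalHomeomorph f) {β : ℝ → Y} (hβ : Continuous β) {c d : ℝ}
    (hc : 0 ≤ c) (hcd : c ≤ d) {g : ℝ → X}
    (hg : ContinuousOn g (Icc 0 c)) (hlift : ∀ t ∈ Icc 0 c, f (g t) = β t)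
    (e : OpenPartialHomeomorph X Y) (hfe : f = e)
    (hsrc : g c ∈ e.source) (htar : ∀ t ∈ Icc c d, β t ∈ e.target) :
    ∃ g' : ℝ → X, ContinuousOn g' (Icc 0 d) ∧ (∀ t ∈ Icc 0 d, f (g' t) = β t) ∧
      EqOn g' g (Icc 0 c) := by
  have hβc : β c = e (g c) := by rw [← hfe]; exact (hlift c ⟨hc, le_refl c⟩).symm
  have hgc : g c = e.symm (β c) := by rw [hβc, e.left_inv hsrc]
  refine ⟨fun t => if t ≤ c then g t else e.symm (β t), ?_, ?_, ?_⟩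
  · apply ContinuousOn.if
    · intro t ht
      have : t = c := by
        have h2 := ht.2
        rw [show {a : ℝ | a ≤ c} = Iic c from rfl, frontier_Iic] at h2
        simpa using h2
      subst this
      exact hgc
    · refine hg.mono ?_
      intro t ht
      rcases ht with ⟨ht1, ht2⟩
      have : t ≤ c := by
        rw [show {a : ℝ | a ≤ c} = Iic c from rfl, closure_Iic] at ht2
        exact ht2
      exact ⟨ht1.1, this⟩
    · have hcont : ContinuousOn (fun t => e.symm (β t)) (Icc c d) := by
        apply e.continuousOn_symm.comp hβ.continuousOn
        intro t ht
        exact htar t ht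
      refine hcont.mono ?_
      intro t ht
      rcases ht with ⟨ht1, ht2⟩
      have : c ≤ t := by
        rw [show {a : ℝ | ¬ a ≤ c} = Ioi c by ext; simp [not_le], closure_Ioi] at ht2
        exact ht2
      exact ⟨this, ht1.2⟩
  · intro t ht
    by_cases h : t ≤ c
    · simpa [h] using hlift t ⟨ht.1, h⟩
    · have htc : t ∈ Icc c d := ⟨le_of_not_ge h, ht.2⟩
      simp only [h, if_false]
      rw [hfe]
      exact e.right_inv (htar t htc)
  · intro t ht
    simp [ht.2]

lemma exists_slice_aux (hf : IsLocalHomeomorph f)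
    (hclosed : ∀ C : Set X, IsClosed C → IsClosed (f '' C))
    {β : ℝ → Y} (hβ : Continuous β) {c : ℝ} (hc : 0 < c) {g : ℝ → X}
    (hlift : ∀ t ∈ Ico 0 c, f (g t) = β t) :
    ∃ e : OpenPartialHomeomorph X Y, f = e ∧ ∃ t₀ ∈ Ico 0 c,
      g t₀ ∈ e.source ∧ ∀ t ∈ Icc t₀ c, β t ∈ e.target := by
  by_contra hcon
  push_neg at hcon
  -- hcon : ∀ e, f = e → ∀ t₀ ∈ Ico 0 c, g t₀ ∈ e.source → ∃ t ∈ Icc t₀ c, β t ∉ e.target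
  -- Step 1: on every tail there is a point where β differs from β c
  have step1 : ∀ s ∈ Ico 0 c, ∃ q ∈ Ico s c, β q ≠ β c := by
    intro s hs
    by_contra hno
    push_neg at hno
    obtain ⟨e, hsrc, hfe⟩ := hf (g s)
    have hβs : β s = β c := hno s ⟨le_refl s, hs.2⟩
    have hgs : f (g s) = β c := by rw [hlift s hs]; exact hβs
    obtain ⟨t, ht, hnt⟩ := hcon e hfe s hs hsrc
    apply hnt
    have : β t = β c := by
      rcases eq_or_lt_of_le ht.2 with h | h
      · rw [h]
      · exact hno t ⟨le_trans hs.1 ht.1 |>.trans_eq rfl |> fun _ => ht.1, h⟩ |>.symm ▸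
          hno t ⟨ht.1, h⟩
    rw [this, ← hgs, hfe]
    exact e.map_source hsrc
  -- Step 2: choose q n → c with β (q n) ≠ β c
  have hsn : ∀ n : ℕ, max 0 (c - 1/(n+1)) ∈ Ico 0 c := by
    intro n
    constructor
    · exact le_max_left _ _
    · apply max_lt hc
      have : (0:ℝ) < 1/(n+1) := by positivity
      linarith
  choose q hq hqne using fun n => step1 _ (hsn n)
  have hq0 : ∀ n, q n ∈ Ico 0 c := fun n => ⟨le_trans (le_max_left _ _) (hq n).1, (hq n).2⟩
  have hqc : Tendsto q atTop (𝓝 c) := by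
    have h1 : Tendsto (fun n : ℕ => max 0 (c - 1/(n+1))) atTop (𝓝 c) := by
      have : Tendsto (fun n : ℕ => c - 1/(n+1:ℝ)) atTop (𝓝 (c - 0)) :=
        tendsto_const_nhds.sub tendsto_one_div_add_atTop_nhds_zero_nat
      rw [sub_zero] at this
      have h2 := (tendsto_const_nhds : Tendsto (fun _ : ℕ => (0:ℝ)) atTop (𝓝 0)).max this
      rwa [max_eq_right hc.le] at h2
    exact tendsto_of_tendsto_of_tendsto_of_le_of_le h1 tendsto_const_nhds
      (fun n => (hq n).1) (fun n => (hq0 n).2.le)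
  have hβq : Tendsto (fun n => β (q n)) atTop (𝓝 (β c)) := (hβ.tendsto c).comp hqc
  -- Step 3: C = range (g ∘ q) is closed
  set C : Set X := range (fun n => g (q n)) with hC
  have hCclosed : IsClosed C := by
    rw [← closure_subset_iff_isClosed]
    intro z hz
    by_cases hz' : ∀ n : ℕ, z ∈ closure ((fun m => g (q m)) '' Ici n)
    · exfalso
      -- f z = β c
      have hfz : f z = β c := by
        by_contra hne
        obtain ⟨V₁, V₂, hV₁o, hV₂o, hm₁, hm₂, hdisj⟩ := t2_separation hne
        obtain ⟨N, hN⟩ := (hβq.eventually (hV₂o.mem_nhds hm₂)).exists_forall_of_atTop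
        have hfzcl : f z ∈ closure V₂ := by
          have h1 : z ∈ closure ((fun m => g (q m)) '' Ici N) := hz' N
          have h2 : (fun m => g (q m)) '' Ici N ⊆ f ⁻¹' V₂ := by
            rintro x ⟨m, hm, rfl⟩
            have : f (g (q m)) = β (q m) := hlift _ (hq0 m)
            simp only [mem_preimage, this]
            exact hN m hm
          have h3 : f z ∈ closure (f '' ((fun m => g (q m)) '' Ici N)) :=
            image_closure_subset_closure_image hf.continuous (mem_image_of_mem f h1)
          refine closure_mono ?_ h3
          rintro y ⟨x, hx, rfl⟩
          exact h2 hx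
        obtain ⟨w, hw1, hw2⟩ := mem_closure_iff.1 hfzcl V₁ hV₁o hm₁
        exact Set.disjoint_left.1 hdisj hw1 hw2
      obtain ⟨e, hsrc, hfe⟩ := hf z
      have hβct : β c ∈ e.target := by rw [← hfz, hfe]; exact e.map_source hsrc
      have hO : IsOpen (β ⁻¹' e.target) := e.open_target.preimage hβ
      obtain ⟨δ, hδ, hball⟩ := Metric.isOpen_iff.1 hO c hβct
      obtain ⟨N₂, hN₂⟩ := (hqc.eventually (eventually_gt_nhds (by linarith : c - δ < c))).exists_forall_of_atTop
      obtain ⟨x, hx1, hx2⟩ := mem_closure_iff.1 (hz' N₂) e.source e.open_source hsrc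
      obtain ⟨m, hm, rfl⟩ := hx2
      obtain ⟨t, ht, hnt⟩ := hcon e hfe (q m) (hq0 m) hx1
      apply hnt
      apply hball
      rw [Metric.mem_ball, Real.dist_eq, abs_of_nonpos (by linarith [ht.2] : t - c ≤ 0)]
      have := hN₂ m hm
      have := ht.1
      linarith [ht.2]
    · push_neg at hz'
      obtain ⟨n, hn⟩ := hz'
      have hsplit : C ⊆ ((fun m => g (q m)) '' Iio n) ∪ ((fun m => g (q m)) '' Ici n) := by
        rintro x ⟨m, rfl⟩
        rcases lt_or_ge m n with h | h
        · exact Or.inl ⟨m, h, rfl⟩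
        · exact Or.inr ⟨m, h, rfl⟩
      have hfin : ((fun m => g (q m)) '' Iio n).Finite := (finite_Iio n).image _
      have : z ∈ closure (((fun m => g (q m)) '' Iio n) ∪ ((fun m => g (q m)) '' Ici n)) :=
        closure_mono hsplit hz
      rw [closure_union, hfin.isClosed.closure_eq] at this
      rcases this with h | h
      · rcases h with ⟨m, _, rfl⟩; exact ⟨m, rfl⟩
      · exact absurd h hn
  -- Step 4: contradiction via closedness of f
  have hfC : IsClosed (f '' C) := hclosed C hCclosed
  have hmem : β c ∈ f '' C := by
    rw [← hfC.closure_eq]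
    apply mem_closure_of_tendsto hβq
    filter_upwards with n
    exact ⟨g (q n), ⟨n, rfl⟩, hlift _ (hq0 n)⟩
  obtain ⟨x, ⟨m, rfl⟩, hxe⟩ := hmem
  exact hqne m (by rw [← hxe, hlift _ (hq0 m)])

lemma extend_to_closed_aux (hf : IsLocalHomeomorph f)
    (hclosed : ∀ C : Set X, IsClosed C → IsClosed (f '' C))
    {β : ℝ → Y} (hβ : Continuous β) {c : ℝ} (hc : 0 < c) {g : ℝ → X}
    (hg : ContinuousOn g (Ico 0 c)) (hlift : ∀ t ∈ Ico 0 c, f (g t) = β t) :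
    ∃ g' : ℝ → X, ContinuousOn g' (Icc 0 c) ∧ (∀ t ∈ Icc 0 c, f (g' t) = β t) ∧
      g' 0 = g 0 := by
  obtain ⟨e, hfe, t₀, ht₀, hsrc, htar⟩ := exists_slice_aux hf hclosed hβ hc hlift
  set h : ℝ → X := fun t => e.symm (β t) with hh
  have hht : ∀ t ∈ Icc t₀ c, h t ∈ e.source ∧ f (h t) = β t := by
    intro t ht
    refine ⟨e.map_target (htar t ht), ?_⟩
    rw [hfe]
    exact e.right_inv (htar t ht)
  have hgt₀ : g t₀ = h t₀ := by
    have h1 : f (g t₀) = f (h t₀) := by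
      rw [(hht t₀ ⟨le_refl _, ht₀.2.le⟩).2]
      exact hlift t₀ ht₀
    have h2 := (hht t₀ ⟨le_refl _, ht₀.2.le⟩).1
    rw [hfe] at h1
    exact e.injOn hsrc h2 h1
  have hhcont : ContinuousOn h (Icc t₀ c) :=
    e.continuousOn_symm.comp hβ.continuousOn (fun t ht => htar t ht)
  -- g = h on [t₀, c)
  have heq : EqOn g h (Ico t₀ c) := by
    intro t ht
    have hsub : Icc t₀ t ⊆ Ico 0 c := fun r hr => ⟨ht₀.1.trans hr.1, hr.2.trans_lt ht.2⟩
    have hsub2 : Icc t₀ t ⊆ Icc t₀ c := Icc_subset_Icc_right ht.2.le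
    exact lift_unique_aux hf (hg.mono hsub) (hhcont.mono hsub2)
      (fun r hr => by rw [hlift r (hsub hr), (hht r (hsub2 hr)).2]) ht.1 hgt₀ ⟨ht.1, le_refl t⟩
  refine ⟨fun t => if t ≤ t₀ then g t else h t, ?_, ?_, ?_⟩
  · apply ContinuousOn.if
    · intro t ht
      have : t = t₀ := by
        have h2 := ht.2
        rw [show {a : ℝ | a ≤ t₀} = Iic t₀ from rfl, frontier_Iic] at h2
        simpa using h2
      subst this
      exact hgt₀
    · refine hg.mono ?_
      rintro t ⟨ht1, ht2⟩
      rw [show {a : ℝ | a ≤ t₀} = Iic t₀ from rfl, closure_Iic] at ht2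
      exact ⟨ht1.1, lt_of_le_of_lt ht2 ht₀.2⟩
    · refine hhcont.mono ?_
      rintro t ⟨ht1, ht2⟩
      rw [show {a : ℝ | ¬ a ≤ t₀} = Ioi t₀ by ext; simp [not_le], closure_Ioi] at ht2
      exact ⟨ht2, ht1.2⟩
  · intro t ht
    by_cases hle : t ≤ t₀
    · simp only [hle, if_true]
      exact hlift t ⟨ht.1, lt_of_le_of_lt hle ht₀.2⟩
    · simp only [hle, if_false]
      exact (hht t ⟨(not_le.1 hle).le, ht.2⟩).2
  · simp [ht₀.1]

end Aux

/-- A closed local homeomorphism between Hausdorff spaces has the path-lifting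
property. -/
theorem path_lifting_of_closed {X Y : Type*} [TopologicalSpace X] [TopologicalSpace Y]
    [T2Space X] [T2Space Y]
    (f : X → Y) (hf : IsLocalHomeomorph f)
    (hclosed : ∀ C : Set X, IsClosed C → IsClosed (f '' C)) :
    ∀ α : unitInterval → Y, Continuous α → ∀ x₀ : X, f x₀ = α 0 →
      ∃ αt : unitInterval → X, Continuous αt ∧ f ∘ αt = α ∧ αt 0 = x₀ := by
  intro α hα x₀ hx₀
  set β : ℝ → Y := fun t => α (Set.projIcc 0 1 zero_le_one t) with hβdef
  have hβ : Continuous β := hα.comp continuous_projIcc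
  have hx₀β : f x₀ = β 0 := by
    rw [hx₀, hβdef]
    simp only [Set.projIcc_left]
    rfl
  set T : Set ℝ := {b | 0 ≤ b ∧ b ≤ 1 ∧ ∃ g : ℝ → X, ContinuousOn g (Icc 0 b) ∧
    (∀ t ∈ Icc 0 b, f (g t) = β t) ∧ g 0 = x₀} with hT
  have h0T : (0:ℝ) ∈ T := by
    refine ⟨le_refl 0, zero_le_one, fun _ => x₀, continuousOn_const, ?_, rfl⟩
    intro t ht
    have : t = 0 := le_antisymm ht.2 ht.1
    rw [this, ← hx₀β]
  have hneT : T.Nonempty := ⟨0, h0T⟩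
  have hbdd : BddAbove T := ⟨1, fun b hb => hb.2.1⟩
  set c : ℝ := sSup T with hcdef
  have hc0 : 0 ≤ c := le_csSup hbdd h0T
  have hc1 : c ≤ 1 := csSup_le hneT (fun b hb => hb.2.1)
  have hdown : ∀ b ∈ T, ∀ b', 0 ≤ b' → b' ≤ b → b' ∈ T := by
    rintro b ⟨hb0, hb1, g, hg1, hg2, hg3⟩ b' hb'0 hb'b
    exact ⟨hb'0, hb'b.trans hb1, g, hg1.mono (Icc_subset_Icc_right hb'b),
      fun t ht => hg2 t ⟨ht.1, ht.2.trans hb'b⟩, hg3⟩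
  have hmemIco : ∀ b, 0 ≤ b → b < c → b ∈ T := by
    intro b hb0 hbc
    obtain ⟨b', hb', hlt⟩ := exists_lt_of_lt_csSup hneT hbc
    exact hdown b' hb' b hb0 hlt.le
  -- c ∈ T
  have hcT : c ∈ T := by
    rcases hc0.eq_or_lt with heq | hcpos
    · rw [← heq]; exact h0T
    have hex : ∀ b, b ∈ Ico 0 c → ∃ g : ℝ → X, ContinuousOn g (Icc 0 b) ∧
        (∀ t ∈ Icc 0 b, f (g t) = β t) ∧ g 0 = x₀ :=
      fun b hb => (hmemIco b hb.1 hb.2).2.2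
    choose gl hgl1 hgl2 hgl3 using hex
    have hmid : ∀ t, t ∈ Ico 0 c → (t + c)/2 ∈ Ico 0 c := by
      intro t ht
      constructor
      · linarith [ht.1, hcpos.le]
      · linarith [ht.2]
    set G : ℝ → X := fun t => if h : t ∈ Ico 0 c then gl _ (hmid t h) t else x₀ with hGdef
    have hGeq : ∀ b, ∀ hb : b ∈ Ico 0 c, EqOn G (gl b hb) (Icc 0 b) := by
      intro b hb t ht
      have htI : t ∈ Ico 0 c := ⟨ht.1, lt_of_le_of_lt ht.2 hb.2⟩
      have htm : t ≤ (t + c)/2 := by linarith [htI.2]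
      simp only [hGdef, dif_pos htI]
      set m := (t + c)/2 with hm
      have hmem : min b m ∈ Ico 0 c := ⟨le_min hb.1 (hmid t htI).1,
        lt_of_le_of_lt (min_le_left _ _) hb.2⟩
      have := lift_unique_aux hf
        ((hgl1 m (hmid t htI)).mono (Icc_subset_Icc_right (min_le_right b m)))
        ((hgl1 b hb).mono (Icc_subset_Icc_right (min_le_left b m)))
        (fun r hr => by
          rw [hgl2 m (hmid t htI) r ⟨hr.1, hr.2.trans (min_le_right b m)⟩,
            hgl2 b hb r ⟨hr.1, hr.2.trans (min_le_left b m)⟩])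
        (le_min hb.1 (hmid t htI).1)
        (by rw [hgl3 m (hmid t htI), hgl3 b hb])
      exact this ⟨ht.1, le_min ht.2 htm⟩
    have hGlift : ∀ t ∈ Ico 0 c, f (G t) = β t := by
      intro t ht
      rw [hGeq t ht ⟨ht.1, le_refl t⟩]
      exact hgl2 t ht t ⟨ht.1, le_refl t⟩
    have hG0 : G 0 = x₀ := by
      rw [hGeq 0 ⟨le_refl _, hcpos⟩ ⟨le_refl _, le_refl _⟩]; exact hgl3 _ _
    have hGcont : ContinuousOn G (Ico 0 c) := by
      intro t ht
      have hb := hmid t ht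
      have htb : t < (t + c)/2 := by linarith [ht.2]
      have h1 : ContinuousWithinAt (gl _ hb) (Icc 0 ((t + c)/2)) t :=
        (hgl1 _ hb) t ⟨ht.1, htb.le⟩
      have h2 : ContinuousWithinAt G (Icc 0 ((t + c)/2)) t :=
        h1.congr (fun r hr => hGeq _ hb hr) (hGeq _ hb ⟨ht.1, htb.le⟩)
      apply h2.mono_of_mem_nhdsWithin
      have hmem : Ico 0 c ∩ Iio ((t + c)/2) ∈ 𝓝[Ico 0 c] t :=
        inter_mem_nhdsWithin _ (Iio_mem_nhds htb)
      exact mem_of_superset hmem (fun r hr => ⟨hr.1.1, hr.2.le⟩)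
    obtain ⟨g', hg'1, hg'2, hg'3⟩ := extend_to_closed_aux hf hclosed hβ hcpos hGcont hGlift
    exact ⟨hc0, hc1, g', hg'1, hg'2, by rw [hg'3, hG0]⟩
  -- c = 1
  obtain ⟨-, -, g, hg1, hg2, hg3⟩ := hcT
  have hceq : c = 1 := by
    by_contra hne
    have hlt : c < 1 := lt_of_le_of_ne hc1 hne
    obtain ⟨e, hsrc, hfe⟩ := hf (g c)
    have hβc : β c ∈ e.target := by
      rw [← hg2 c ⟨hc0, le_refl c⟩, hfe]
      exact e.map_source hsrc
    obtain ⟨δ, hδ, hball⟩ := Metric.isOpen_iff.1 (e.open_target.preimage hβ) c hβc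
    set d : ℝ := min 1 (c + δ/2) with hd
    have hcd : c < d := lt_min hlt (by linarith)
    have htar : ∀ t ∈ Icc c d, β t ∈ e.target := by
      intro t ht
      apply hball
      rw [Metric.mem_ball, Real.dist_eq, abs_of_nonneg (by linarith [ht.1])]
      have : t ≤ c + δ/2 := ht.2.trans (min_le_right _ _)
      linarith
    obtain ⟨g', hg'1, hg'2, hg'3⟩ := extend_right_aux hf hβ hc0 hcd.le hg1 hg2 e hfe hsrc htar
    have hdT : d ∈ T := ⟨by linarith, min_le_left _ _, g', hg'1, hg'2,
      by rw [hg'3 ⟨le_refl 0, hc0⟩, hg3]⟩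
    exact absurd (le_csSup hbdd hdT) (not_le.2 hcd)
  refine ⟨fun t => g ↑t, ?_, ?_, ?_⟩
  · apply hg1.comp_continuous continuous_subtype_val
    intro t
    rw [hceq]
    exact t.2
  · funext t
    have := hg2 ↑t (by rw [hceq]; exact t.2)
    simp only [Function.comp_apply, this, hβdef, Set.projIcc_val]
  · have : ((0 : unitInterval) : ℝ) = 0 := rfl
    simp only [this, hg3]
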